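/- Let μ be a compactly supported Borel probability measure on ℝ^d × ℝ^d with velocity barycenter v̄, and suppose supp(μ) ⊆ B̄(x̄, X) × B̄(v̄, V) for some x̄ ∈ ℝ^d and X, V ≥ 0. Then for every (x, v) ∈ ℝ^d × ℝ^d with ‖x − x̄‖ ≤ X and ‖v − v̄‖ = V, one has ⟨ξ[μ](x, v), v − v̄⟩ ≤ −φ(2X)·V². -/

import Mathlib

open MeasureTheory Metric Set

/-- The (topological) support of a measure. -/
def msupp {α : Type*} [TopologicalSpace α] [MeasurableSpace α]
    (μ : Measure α) : Set α :=
  {x | ∀ U : Set α, IsOpen U → x ∈ U → 0 < μ U}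

/-- The Cucker–Smale interaction kernel. -/
noncomputable def xi {d : ℕ} (φ : ℝ → ℝ)
    (μ : Measure (EuclideanSpace ℝ (Fin d) × EuclideanSpace ℝ (Fin d)))
    (x v : EuclideanSpace ℝ (Fin d)) : EuclideanSpace ℝ (Fin d) :=
  ∫ p, φ (‖x - p.1‖) • (p.2 - v) ∂μ

lemma ae_mem_msupp {α : Type*} [TopologicalSpace α] [MeasurableSpace α]
    [SecondCountableTopology α] (μ : Measure α) :
    ∀ᵐ x ∂μ, x ∈ msupp μ := by
  rw [MeasureTheory.ae_iff]
  have h : ∀ y ∈ {x | x ∉ msupp μ}, ∃ U : Set α, IsOpen U ∧ y ∈ U ∧ μ U = 0 := by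
    intro y hy
    simp only [mem_setOf_eq, msupp, not_forall] at hy
    obtain ⟨U, hUo, hyU, hU⟩ := hy
    exact ⟨U, hUo, hyU, by simpa using hU⟩
  choose! U hUo hyU hU0 using h
  have hL : IsLindelof {x | x ∉ msupp μ} :=
    (HereditarilyLindelofSpace.isHereditarilyLindelof_univ).isLindelof_subset (subset_univ _)
  obtain ⟨t, htc, hts, hcov⟩ := hL.elim_nhds_subcover U
    (fun y hy => (hUo y hy).mem_nhds (hyU y hy))
  refine measure_mono_null hcov ?_
  exact (measure_biUnion_null_iff htc).2 fun y hy => hU0 y (hts y hy)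

set_option maxHeartbeats 1000000 in
theorem stmt8 {d : ℕ} (hd : 0 < d) (φ : ℝ → ℝ) (hφc : Continuous φ)
    (hφa : Antitone φ) (hφp : ∀ r : ℝ, 0 < φ r)
    (μ : Measure (EuclideanSpace ℝ (Fin d) × EuclideanSpace ℝ (Fin d)))
    [IsProbabilityMeasure μ]
    (xbar : EuclideanSpace ℝ (Fin d)) (vbar : EuclideanSpace ℝ (Fin d))
    (hvbar : vbar = ∫ p, p.2 ∂μ)
    (X V : ℝ) (hX : 0 ≤ X) (hV : 0 ≤ V)
    (hsupp : msupp μ ⊆ closedBall xbar X ×ˢ closedBall vbar V)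
    (x v : EuclideanSpace ℝ (Fin d)) (hx : ‖x - xbar‖ ≤ X) (hv : ‖v - vbar‖ = V) :
    inner ℝ (xi φ μ x v) (v - vbar) ≤ -(φ (2 * X)) * V ^ 2 := by
  set c : EuclideanSpace ℝ (Fin d) := v - vbar with hc
  have hae : ∀ᵐ p ∂μ, p ∈ closedBall xbar X ×ˢ closedBall vbar V :=
    (ae_mem_msupp μ).mono fun p hp => hsupp hp
  have hφ0 : ∀ r : ℝ, 0 ≤ r → φ r ≤ φ 0 := fun r hr => hφa hr
  have hmeas2 : AEStronglyMeasurable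
      (fun p : EuclideanSpace ℝ (Fin d) × EuclideanSpace ℝ (Fin d) => p.2) μ :=
    continuous_snd.aestronglyMeasurable
  have hi2 : Integrable
      (fun p : EuclideanSpace ℝ (Fin d) × EuclideanSpace ℝ (Fin d) => p.2) μ := by
    refine (integrable_const (V + ‖vbar‖)).mono' hmeas2 ?_
    refine hae.mono fun p hp => ?_
    have h2 : ‖p.2 - vbar‖ ≤ V := by simpa [dist_eq_norm] using hp.2
    calc ‖p.2‖ = ‖(p.2 - vbar) + vbar‖ := by congr 1; abel
    _ ≤ ‖p.2 - vbar‖ + ‖vbar‖ := norm_add_le _ _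
    _ ≤ V + ‖vbar‖ := by linarith
  have hisub : Integrable
      (fun p : EuclideanSpace ℝ (Fin d) × EuclideanSpace ℝ (Fin d) => p.2 - vbar) μ :=
    hi2.sub (integrable_const _)
  have hfc : Continuous
      (fun p : EuclideanSpace ℝ (Fin d) × EuclideanSpace ℝ (Fin d) =>
        φ (‖x - p.1‖) • (p.2 - v)) := by
    apply Continuous.smul (f := fun p : EuclideanSpace ℝ (Fin d) × EuclideanSpace ℝ (Fin d) => φ (‖x - p.1‖)) (g := fun p : EuclideanSpace ℝ (Fin d) × EuclideanSpace ℝ (Fin d) => p.2 - v)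
    · exact hφc.comp ((continuous_const.sub continuous_fst).norm)
    · exact continuous_snd.sub continuous_const
  have hfi : Integrable
      (fun p : EuclideanSpace ℝ (Fin d) × EuclideanSpace ℝ (Fin d) =>
        φ (‖x - p.1‖) • (p.2 - v)) μ := by
    refine (integrable_const (φ 0 * (2 * V))).mono' hfc.aestronglyMeasurable ?_
    refine hae.mono fun p hp => ?_
    have h2 : ‖p.2 - vbar‖ ≤ V := by simpa [dist_eq_norm] using hp.2
    have hb : ‖p.2 - v‖ ≤ 2 * V := by
      calc ‖p.2 - v‖ = ‖(p.2 - vbar) - (v - vbar)‖ := by congr 1; abel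
      _ ≤ ‖p.2 - vbar‖ + ‖v - vbar‖ := norm_sub_le _ _
      _ ≤ 2 * V := by rw [hv]; linarith
    have hφb : φ (‖x - p.1‖) ≤ φ 0 := hφ0 _ (norm_nonneg _)
    calc ‖φ (‖x - p.1‖) • (p.2 - v)‖ = φ (‖x - p.1‖) * ‖p.2 - v‖ := by
          rw [norm_smul, Real.norm_eq_abs, abs_of_pos (hφp _)]
    _ ≤ φ 0 * (2 * V) :=
        mul_le_mul hφb hb (norm_nonneg _) (le_of_lt (hφp 0))
  have hkey : (inner ℝ (xi φ μ x v) c : ℝ)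
      = ∫ p, (inner ℝ (φ (‖x - p.1‖) • (p.2 - v)) c : ℝ) ∂μ := by
    rw [xi, real_inner_comm, ← integral_inner hfi c]
    simp_rw [real_inner_comm c]
  rw [hkey]
  have hVc : (inner ℝ c c : ℝ) = V ^ 2 := by
    rw [real_inner_self_eq_norm_sq, hc, hv]
  have hbound : ∀ᵐ p ∂μ,
      (inner ℝ (φ (‖x - p.1‖) • (p.2 - v)) c : ℝ)
        ≤ φ (2 * X) * ((inner ℝ (p.2 - vbar) c : ℝ) - V ^ 2) := by
    refine hae.mono fun p hp => ?_
    have h1 : ‖p.1 - xbar‖ ≤ X := by simpa [dist_eq_norm] using hp.1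
    have h2 : ‖p.2 - vbar‖ ≤ V := by simpa [dist_eq_norm] using hp.2
    have hdist : ‖x - p.1‖ ≤ 2 * X := by
      calc ‖x - p.1‖ = ‖(x - xbar) - (p.1 - xbar)‖ := by congr 1; abel
      _ ≤ ‖x - xbar‖ + ‖p.1 - xbar‖ := norm_sub_le _ _
      _ ≤ 2 * X := by linarith
    have hφge : φ (2 * X) ≤ φ (‖x - p.1‖) := hφa hdist
    have hsplit : (inner ℝ (φ (‖x - p.1‖) • (p.2 - v)) c : ℝ)
        = φ (‖x - p.1‖) * ((inner ℝ (p.2 - vbar) c : ℝ) - V ^ 2) := by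
      have h3 : p.2 - v = (p.2 - vbar) - c := by rw [hc]; abel
      rw [h3, real_inner_smul_left, inner_sub_left, hVc]
    rw [hsplit]
    have hcs : (inner ℝ (p.2 - vbar) c : ℝ) ≤ V ^ 2 := by
      calc (inner ℝ (p.2 - vbar) c : ℝ) ≤ ‖p.2 - vbar‖ * ‖c‖ := real_inner_le_norm _ _
      _ ≤ V * V := by
          apply mul_le_mul h2 _ (norm_nonneg _) hV
          rw [hc, hv]
      _ = V ^ 2 := (sq V).symm
    have hneg : (inner ℝ (p.2 - vbar) c : ℝ) - V ^ 2 ≤ 0 := by linarith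
    exact mul_le_mul_of_nonpos_right hφge hneg
  have higl : Integrable
      (fun p : EuclideanSpace ℝ (Fin d) × EuclideanSpace ℝ (Fin d) =>
        (inner ℝ (φ (‖x - p.1‖) • (p.2 - v)) c : ℝ)) μ := hfi.inner_const c
  have hinn : Integrable
      (fun p : EuclideanSpace ℝ (Fin d) × EuclideanSpace ℝ (Fin d) =>
        (inner ℝ (p.2 - vbar) c : ℝ)) μ := hisub.inner_const c
  have higr : Integrable
      (fun p : EuclideanSpace ℝ (Fin d) × EuclideanSpace ℝ (Fin d) =>
        φ (2 * X) * ((inner ℝ (p.2 - vbar) c : ℝ) - V ^ 2)) μ :=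
    ((hinn.sub (integrable_const _)).const_mul _)
  refine (integral_mono_ae higl higr hbound).trans ?_
  have hint0 : (∫ p : EuclideanSpace ℝ (Fin d) × EuclideanSpace ℝ (Fin d),
      (p.2 - vbar) ∂μ) = 0 := by
    rw [integral_sub hi2 (integrable_const _), integral_const]
    simp [← hvbar]
  have hzero : (∫ p : EuclideanSpace ℝ (Fin d) × EuclideanSpace ℝ (Fin d),
      (inner ℝ (p.2 - vbar) c : ℝ) ∂μ) = 0 := by
    calc (∫ p : EuclideanSpace ℝ (Fin d) × EuclideanSpace ℝ (Fin d),
        (inner ℝ (p.2 - vbar) c : ℝ) ∂μ)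
        = ∫ p : EuclideanSpace ℝ (Fin d) × EuclideanSpace ℝ (Fin d),
            (inner ℝ c (p.2 - vbar) : ℝ) ∂μ := by simp_rw [real_inner_comm c]
      _ = inner ℝ c (∫ p : EuclideanSpace ℝ (Fin d) × EuclideanSpace ℝ (Fin d),
            (p.2 - vbar) ∂μ) := integral_inner hisub c
      _ = 0 := by rw [hint0, inner_zero_right]
  rw [integral_const_mul, integral_sub hinn (integrable_const _), hzero, integral_const]
  simp
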